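/- Let α, β ∈ ℝ⁺ \ {1}, φ₁, φ₂, ψ entire, and Θₙ(x) = α^{φ₁(x)} (dⁿ/dxⁿ)(ψ(x)β^{−φ₂(x)}). Then for all n ≥ 0: ∑_{p=0}^{n} (n choose p) [Θ_{n−p+1}(x) ψ^{(p)}(x) − Θ_{n−p}(x) ψ^{(p+1)}(x)] = −(log β) ∑_{k=0}^{n} ∑_{p=0}^{n−k} (n choose k)((n−k) choose p) Θ_{n−p−k}(x) ψ^{(p)}(x) φ₂^{(k+1)}(x). -/

import Mathlib

open Finset

private lemma itd_add {f g : ℂ → ℂ} (hf : Differentiable ℂ f) (hg : Differentiable ℂ g)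
    (n : ℕ) (x : ℂ) :
    iteratedDeriv n (fun z => f z + g z) x = iteratedDeriv n f x + iteratedDeriv n g x := by
  simp only [← iteratedDerivWithin_univ]
  exact iteratedDerivWithin_add (Set.mem_univ x) uniqueDiffOn_univ
    hf.contDiff.contDiffWithinAt hg.contDiff.contDiffWithinAt

private lemma itd_sub {f g : ℂ → ℂ} (hf : Differentiable ℂ f) (hg : Differentiable ℂ g)
    (n : ℕ) (x : ℂ) :
    iteratedDeriv n (fun z => f z - g z) x = iteratedDeriv n f x - iteratedDeriv n g x := by
  simp only [← iteratedDerivWithin_univ]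
  exact iteratedDerivWithin_sub (Set.mem_univ x) uniqueDiffOn_univ
    hf.contDiff.contDiffWithinAt hg.contDiff.contDiffWithinAt

private lemma itd_cmul (c : ℂ) {f : ℂ → ℂ} (hf : Differentiable ℂ f) (n : ℕ) (x : ℂ) :
    iteratedDeriv n (fun z => c * f z) x = c * iteratedDeriv n f x := by
  simp only [← iteratedDerivWithin_univ]
  exact iteratedDerivWithin_const_mul (Set.mem_univ x) uniqueDiffOn_univ c
    hf.contDiff.contDiffWithinAt

private lemma diff_deriv {f : ℂ → ℂ} (hf : Differentiable ℂ f) : Differentiable ℂ (deriv f) := by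
  have h : ContDiff ℂ ((1 : WithTop ℕ∞) + 1) f := hf.contDiff
  exact (contDiff_succ_iff_deriv.mp h).2.2.differentiable one_ne_zero

private lemma pascal_step (A B : ℕ → ℂ) (n : ℕ) :
    (∑ p ∈ Finset.range (n + 1), (n.choose p : ℂ) * A (p + 1) * B (n - p)) +
      ∑ p ∈ Finset.range (n + 1), (n.choose p : ℂ) * A p * B (n + 1 - p) =
    ∑ p ∈ Finset.range (n + 2), ((n + 1).choose p : ℂ) * A p * B (n + 1 - p) := by
  have h2 : ∑ p ∈ Finset.range (n + 1), (n.choose p : ℂ) * A p * B (n + 1 - p)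
      = (∑ p ∈ Finset.range (n + 1), (n.choose (p + 1) : ℂ) * A (p + 1) * B (n - p))
        + A 0 * B (n + 1) := by
    rw [Finset.sum_range_succ' (fun p => (n.choose p : ℂ) * A p * B (n + 1 - p)) n,
      Finset.sum_range_succ (fun p => (n.choose (p + 1) : ℂ) * A (p + 1) * B (n - p)) n]
    simp [Nat.succ_sub_succ, Nat.choose_succ_self]
  rw [h2, Finset.sum_range_succ' (fun p => ((n + 1).choose p : ℂ) * A p * B (n + 1 - p)) (n + 1)]
  simp only [Nat.succ_sub_succ, Nat.choose_succ_succ, Nat.cast_add, Nat.choose_zero_right,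
    Nat.cast_one, one_mul, add_mul, Finset.sum_add_distrib, Nat.succ_eq_add_one,
    Nat.sub_zero]
  ring

private lemma itd_mul : ∀ (n : ℕ) {f g : ℂ → ℂ}, Differentiable ℂ f → Differentiable ℂ g →
    ∀ x : ℂ, iteratedDeriv n (fun z => f z * g z) x =
      ∑ p ∈ Finset.range (n + 1),
        (n.choose p : ℂ) * iteratedDeriv p f x * iteratedDeriv (n - p) g x := by
  intro n
  induction n with
  | zero => intro f g hf hg x; simp
  | succ n ih =>
    intro f g hf hg x
    have hf' : Differentiable ℂ (deriv f) := diff_deriv hf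
    have hg' : Differentiable ℂ (deriv g) := diff_deriv hg
    rw [iteratedDeriv_succ']
    have hde : deriv (fun z => f z * g z) = fun z => deriv f z * g z + f z * deriv g z := by
      funext z; exact deriv_mul (hf z) (hg z)
    rw [hde, itd_add (f := fun z => deriv f z * g z) (g := fun z => f z * deriv g z) (hf'.mul hg) (hf.mul hg') n x, ih hf' hg x, ih hf hg' x]
    have e1 : ∀ p, iteratedDeriv p (deriv f) x = iteratedDeriv (p + 1) f x := by
      intro p; rw [iteratedDeriv_succ']
    have e2 : ∀ p, iteratedDeriv p (deriv g) x = iteratedDeriv (p + 1) g x := by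
      intro p; rw [iteratedDeriv_succ']
    simp only [e1, e2]
    have e3 : ∀ p ∈ Finset.range (n + 1),
        (n.choose p : ℂ) * iteratedDeriv p f x * iteratedDeriv (n - p + 1) g x
        = (n.choose p : ℂ) * iteratedDeriv p f x * iteratedDeriv (n + 1 - p) g x := by
      intro p hp
      rw [Nat.sub_add_comm (Nat.lt_succ_iff.mp (Finset.mem_range.mp hp))]
    rw [Finset.sum_congr rfl e3]
    exact pascal_step (fun p => iteratedDeriv p f x) (fun q => iteratedDeriv q g x) n

open Complex Finset

theorem recurrence_t_deriv
    (α β : ℝ) (hα : 0 < α) (hα1 : α ≠ 1) (hβ : 0 < β) (hβ1 : β ≠ 1)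
    (φ₁ φ₂ ψ : ℂ → ℂ) (hφ₁ : Differentiable ℂ φ₁) (hφ₂ : Differentiable ℂ φ₂)
    (hψ : Differentiable ℂ ψ)
    (Θ : ℕ → ℂ → ℂ)
    (hΘ : ∀ n x, Θ n x = Complex.exp (φ₁ x * (Real.log α : ℂ)) *
      iteratedDeriv n (fun z => ψ z * Complex.exp (-(φ₂ z) * (Real.log β : ℂ))) x)
    (n : ℕ) (x : ℂ) :
    ∑ p ∈ Finset.range (n + 1), (n.choose p : ℂ) *
        (Θ (n - p + 1) x * iteratedDeriv p ψ x - Θ (n - p) x * iteratedDeriv (p + 1) ψ x)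
    = -(Real.log β : ℂ) *
      ∑ k ∈ Finset.range (n + 1), ∑ p ∈ Finset.range (n - k + 1),
        (n.choose k : ℂ) * ((n - k).choose p : ℂ) *
          Θ (n - p - k) x * iteratedDeriv p ψ x * iteratedDeriv (k + 1) φ₂ x := by
  set g : ℂ → ℂ := fun z => ψ z * Complex.exp (-(φ₂ z) * (Real.log β : ℂ)) with hg_def
  have hgd : Differentiable ℂ g := by
    rw [hg_def]; exact hψ.mul ((hφ₂.neg.mul_const _).cexp)
  have hψ' : Differentiable ℂ (deriv ψ) := diff_deriv hψ
  have hg' : Differentiable ℂ (deriv g) := diff_deriv hgd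
  have hφ₂' : Differentiable ℂ (deriv φ₂) := diff_deriv hφ₂
  have hΘ' : ∀ m, Θ m x = Complex.exp (φ₁ x * (Real.log α : ℂ)) * iteratedDeriv m g x :=
    fun m => hΘ m x
  -- pointwise identity : ψ g' - ψ' g = -log β * (φ₂' * (ψ g))
  have hpt : (fun z => ψ z * deriv g z - deriv ψ z * g z)
      = fun z => -(Real.log β : ℂ) * (deriv φ₂ z * (ψ z * g z)) := by
    funext z
    simp only [hg_def]
    have hEz : HasDerivAt (fun y => Complex.exp (-(φ₂ y) * (Real.log β : ℂ)))
        (Complex.exp (-(φ₂ z) * (Real.log β : ℂ)) * (-(deriv φ₂ z) * (Real.log β : ℂ))) z :=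
      ((hφ₂ z).hasDerivAt.neg.mul_const _).cexp
    have hdg : deriv (fun y => ψ y * Complex.exp (-(φ₂ y) * (Real.log β : ℂ))) z
        = deriv ψ z * Complex.exp (-(φ₂ z) * (Real.log β : ℂ))
          + ψ z * (Complex.exp (-(φ₂ z) * (Real.log β : ℂ))
              * (-(deriv φ₂ z) * (Real.log β : ℂ))) :=
      ((hψ z).hasDerivAt.mul hEz).deriv
    rw [hdg]; ring
  have key : ∑ p ∈ Finset.range (n + 1), (n.choose p : ℂ) *
        (iteratedDeriv (n - p + 1) g x * iteratedDeriv p ψ x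
          - iteratedDeriv (n - p) g x * iteratedDeriv (p + 1) ψ x)
      = -(Real.log β : ℂ) * ∑ k ∈ Finset.range (n + 1), ∑ p ∈ Finset.range (n - k + 1),
          (n.choose k : ℂ) * ((n - k).choose p : ℂ) * iteratedDeriv (n - p - k) g x
            * iteratedDeriv p ψ x * iteratedDeriv (k + 1) φ₂ x := by
    have s1 : iteratedDeriv n (fun z => ψ z * deriv g z) x
        = ∑ p ∈ Finset.range (n + 1), (n.choose p : ℂ) * iteratedDeriv p ψ x
            * iteratedDeriv (n - p + 1) g x := by
      rw [itd_mul n hψ hg' x]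
      exact Finset.sum_congr rfl fun p _ => by rw [← iteratedDeriv_succ']
    have s2 : iteratedDeriv n (fun z => deriv ψ z * g z) x
        = ∑ p ∈ Finset.range (n + 1), (n.choose p : ℂ) * iteratedDeriv (p + 1) ψ x
            * iteratedDeriv (n - p) g x := by
      rw [itd_mul n hψ' hgd x]
      exact Finset.sum_congr rfl fun p _ => by rw [← iteratedDeriv_succ']
    have lhs_eq : ∑ p ∈ Finset.range (n + 1), (n.choose p : ℂ) *
          (iteratedDeriv (n - p + 1) g x * iteratedDeriv p ψ x
            - iteratedDeriv (n - p) g x * iteratedDeriv (p + 1) ψ x)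
        = iteratedDeriv n (fun z => ψ z * deriv g z - deriv ψ z * g z) x := by
      rw [itd_sub (f := fun z => ψ z * deriv g z) (g := fun z => deriv ψ z * g z) (hψ.mul hg') (hψ'.mul hgd) n x, s1, s2, ← Finset.sum_sub_distrib]
      exact Finset.sum_congr rfl fun p _ => by ring
    rw [lhs_eq, hpt, itd_cmul _ (f := fun z => deriv φ₂ z * (ψ z * g z)) (hφ₂'.mul (hψ.mul hgd)) n x,
      itd_mul n (f := deriv φ₂) (g := fun z => ψ z * g z) hφ₂' (hψ.mul hgd) x]
    congr 1
    refine Finset.sum_congr rfl fun k hk => ?_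
    rw [itd_mul (n - k) hψ hgd x, ← iteratedDeriv_succ', Finset.mul_sum]
    refine Finset.sum_congr rfl fun p hp => ?_
    rw [show n - k - p = n - p - k by omega]
    ring
  simp only [hΘ']
  have step1 : ∑ p ∈ Finset.range (n + 1), (n.choose p : ℂ) *
        (Complex.exp (φ₁ x * (Real.log α : ℂ)) * iteratedDeriv (n - p + 1) g x
            * iteratedDeriv p ψ x
          - Complex.exp (φ₁ x * (Real.log α : ℂ)) * iteratedDeriv (n - p) g x
            * iteratedDeriv (p + 1) ψ x)
      = Complex.exp (φ₁ x * (Real.log α : ℂ)) *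
          ∑ p ∈ Finset.range (n + 1), (n.choose p : ℂ) *
            (iteratedDeriv (n - p + 1) g x * iteratedDeriv p ψ x
              - iteratedDeriv (n - p) g x * iteratedDeriv (p + 1) ψ x) := by
    rw [Finset.mul_sum]
    exact Finset.sum_congr rfl fun p _ => by ring
  rw [step1, key]
  simp only [Finset.mul_sum]
  exact Finset.sum_congr rfl fun k _ => Finset.sum_congr rfl fun p _ => by ring
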